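/- The Varshamov-Tenengolz code VT_a(n), consisting of all binary vectors (x_1,...,x_n) with sum_{i=1}^n i·x_i ≡ a (mod n+1), can correct a single deletion: if two codewords of VT_a(n) yield the same vector of length n-1 after deleting one coordinate each, then the two codewords are equal. -/
import Mathlib

namespace VTAux

/-- Integer indicator of the `i`-th bit. -/
def F (l : List Bool) (i : ℕ) : ℤ := if l.getD i false then 1 else 0

lemma F_nonneg (l : List Bool) (i : ℕ) : 0 ≤ F l i := by
  unfold F; split <;> norm_num

lemma F_le_one (l : List Bool) (i : ℕ) : F l i ≤ 1 := by
  unfold F; split <;> norm_num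

lemma getD_eraseIdx (l : List Bool) (k j : ℕ) :
    (l.eraseIdx k).getD j false =
      if j < k then l.getD j false else l.getD (j+1) false := by
  simp [List.getD_eq_getElem?_getD, List.getElem?_eraseIdx]
  split <;> rfl

lemma aux (n a : ℕ) (x y : List Bool)
    (hx : x.length = n) (hy : y.length = n)
    (hxa : (∑ i ∈ Finset.range n, (i + 1) * (if x.getD i false then 1 else 0)) % (n + 1) = a)
    (hya : (∑ i ∈ Finset.range n, (i + 1) * (if y.getD i false then 1 else 0)) % (n + 1) = a)
    (p q : ℕ) (hp : p < n) (hq : q < n) (hpq : p ≤ q)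
    (h : x.eraseIdx p = y.eraseIdx q) : x = y := by
  -- pointwise consequences of the erasure equality
  have key : ∀ j, (x.eraseIdx p).getD j false = (y.eraseIdx q).getD j false := by
    intro j; rw [h]
  have key1 : ∀ j, j < p → x.getD j false = y.getD j false := by
    intro j hj
    have := key j
    rw [getD_eraseIdx, getD_eraseIdx, if_pos hj, if_pos (lt_of_lt_of_le hj hpq)] at this
    exact this
  have key2 : ∀ j, p ≤ j → j < q → x.getD (j+1) false = y.getD j false := by
    intro j hj1 hj2
    have := key j
    rw [getD_eraseIdx, getD_eraseIdx, if_neg (by omega), if_pos hj2] at this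
    exact this
  have key3 : ∀ j, q < j → x.getD j false = y.getD j false := by
    intro j hj
    have := key (j-1)
    rw [getD_eraseIdx, getD_eraseIdx, if_neg (by omega), if_neg (by omega)] at this
    have e : j - 1 + 1 = j := by omega
    rwa [e] at this
  -- integer checksums
  set Sx : ℤ := ∑ i ∈ Finset.range n, ((i:ℤ) + 1) * F x i with hSx
  set Sy : ℤ := ∑ i ∈ Finset.range n, ((i:ℤ) + 1) * F y i with hSy
  have castx : ((∑ i ∈ Finset.range n, (i + 1) * (if x.getD i false then 1 else 0) : ℕ) : ℤ) = Sx := by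
    rw [hSx]; push_cast; apply Finset.sum_congr rfl; intro i _
    unfold F; split <;> push_cast <;> ring
  have casty : ((∑ i ∈ Finset.range n, (i + 1) * (if y.getD i false then 1 else 0) : ℕ) : ℤ) = Sy := by
    rw [hSy]; push_cast; apply Finset.sum_congr rfl; intro i _
    unfold F; split <;> push_cast <;> ring
  have hdvd : ((n:ℤ) + 1) ∣ Sx - Sy := by
    have hmod : Sx % ((n:ℤ)+1) = Sy % ((n:ℤ)+1) := by
      have hx' := hxa.trans hya.symm
      have h2 := congrArg (fun m : ℕ => (m : ℤ)) hx'
      simp only [Int.natCast_mod, Nat.cast_add, Nat.cast_one, castx, casty] at h2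
      exact h2
    exact Int.ModEq.dvd (Int.ModEq.symm hmod)
  -- the key identity
  set T : ℤ := ∑ i ∈ Finset.Ico p q, F y i with hT
  have hid : Sx - Sy = ((p:ℤ)+1) * F x p + T - ((q:ℤ)+1) * F y q := by
    have split1 : ∀ z : List Bool, (∑ i ∈ Finset.range n, ((i:ℤ) + 1) * F z i)
        = (∑ i ∈ Finset.Ico 0 p, ((i:ℤ) + 1) * F z i)
          + (∑ i ∈ Finset.Ico p (q+1), ((i:ℤ) + 1) * F z i)
          + (∑ i ∈ Finset.Ico (q+1) n, ((i:ℤ) + 1) * F z i) := by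
      intro z
      rw [Finset.range_eq_Ico,
        ← Finset.sum_Ico_consecutive _ (Nat.zero_le (q+1)) (by omega : q+1 ≤ n),
        ← Finset.sum_Ico_consecutive _ (Nat.zero_le p) (by omega : p ≤ q+1)]
    have e1 : (∑ i ∈ Finset.Ico 0 p, ((i:ℤ) + 1) * F x i)
        = (∑ i ∈ Finset.Ico 0 p, ((i:ℤ) + 1) * F y i) := by
      apply Finset.sum_congr rfl; intro i hi
      simp only [Finset.mem_Ico] at hi
      unfold F; rw [key1 i hi.2]
    have e3 : (∑ i ∈ Finset.Ico (q+1) n, ((i:ℤ) + 1) * F x i)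
        = (∑ i ∈ Finset.Ico (q+1) n, ((i:ℤ) + 1) * F y i) := by
      apply Finset.sum_congr rfl; intro i hi
      simp only [Finset.mem_Ico] at hi
      unfold F; rw [key3 i (by omega)]
    have e2x : (∑ i ∈ Finset.Ico p (q+1), ((i:ℤ) + 1) * F x i)
        = ((p:ℤ)+1) * F x p + ∑ i ∈ Finset.Ico p q, ((i:ℤ) + 2) * F y i := by
      rw [Finset.sum_eq_sum_Ico_succ_bot (by omega : p < q+1)]
      congr 1
      rw [← Finset.sum_Ico_add' (fun (i : ℕ) => ((i:ℤ) + 1) * F x i) p q 1]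
      apply Finset.sum_congr rfl; intro i hi
      simp only [Finset.mem_Ico] at hi
      unfold F; rw [key2 i hi.1 hi.2]; push_cast; ring
    have e2y : (∑ i ∈ Finset.Ico p (q+1), ((i:ℤ) + 1) * F y i)
        = (∑ i ∈ Finset.Ico p q, ((i:ℤ) + 1) * F y i) + ((q:ℤ)+1) * F y q := by
      rw [Finset.sum_Ico_succ_top hpq]
    rw [hSx, hSy, split1 x, split1 y, e1, e3, e2x, e2y, hT]
    have : (∑ i ∈ Finset.Ico p q, ((i:ℤ) + 2) * F y i)
        - (∑ i ∈ Finset.Ico p q, ((i:ℤ) + 1) * F y i)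
        = ∑ i ∈ Finset.Ico p q, F y i := by
      rw [← Finset.sum_sub_distrib]
      apply Finset.sum_congr rfl; intro i _; ring
    linarith [this]
  -- bounds on T
  have hT0 : 0 ≤ T := Finset.sum_nonneg fun i _ => F_nonneg y i
  have hT1 : T ≤ (q:ℤ) - p := by
    have h1 : T ≤ ∑ _i ∈ Finset.Ico p q, (1:ℤ) :=
      Finset.sum_le_sum fun i _ => F_le_one y i
    simp only [Finset.sum_const, Nat.card_Ico, nsmul_eq_mul, mul_one] at h1
    omega
  -- pointwise equality of bits
  have hall : ∀ i, x.getD i false = y.getD i false := by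
    rcases hb : x.getD p false with _ | _ <;> rcases hc : y.getD q false with _ | _
    · -- both false : T = 0
      have hD : Sx - Sy = T := by rw [hid]; unfold F; rw [hb, hc]; simp
      have hT0' : T = 0 := by
        rcases hT0.lt_or_eq with hpos | h0
        · exfalso
          have h1 : (0:ℤ) < Sx - Sy := by omega
          have h2 := Int.le_of_dvd h1 hdvd
          omega
        · omega
      have hzero : ∀ i ∈ Finset.Ico p q, F y i = 0 :=
        (Finset.sum_eq_zero_iff_of_nonneg
          (fun i _ => F_nonneg y i)).mp (by rw [← hT]; exact hT0')
      have hyf : ∀ i, p ≤ i → i ≤ q → y.getD i false = false := by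
        intro i h1 h2
        rcases eq_or_lt_of_le h2 with rfl | h2
        · exact hc
        · have := hzero i (Finset.mem_Ico.mpr ⟨h1, h2⟩)
          unfold F at this
          rcases hgd : y.getD i false with _ | _
          · rfl
          · exfalso; rw [hgd] at this; simp at this
      have hxf : ∀ i, p ≤ i → i ≤ q → x.getD i false = false := by
        intro i h1 h2
        rcases eq_or_lt_of_le h1 with rfl | h1
        · exact hb
        · have e : i - 1 + 1 = i := by omega
          rw [← e, key2 (i-1) (by omega) (by omega)]
          exact hyf (i-1) (by omega) (by omega)
      intro i
      rcases lt_or_ge i p with hi | hi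
      · exact key1 i hi
      · rcases le_or_gt i q with hi2 | hi2
        · rw [hxf i hi hi2, hyf i hi hi2]
        · exact key3 i hi2
    · -- x_p false, y_q true : contradiction
      exfalso
      have hD : Sx - Sy = T - ((q:ℤ)+1) := by
        rw [hid]; unfold F; rw [hb, hc]; simp
      have hneg : 0 < -(Sx - Sy) := by omega
      have := Int.le_of_dvd hneg (dvd_neg.mpr hdvd)
      omega
    · -- x_p true, y_q false : contradiction
      exfalso
      have hD : Sx - Sy = ((p:ℤ)+1) + T := by
        rw [hid]; unfold F; rw [hb, hc]; simp
      have hpos : 0 < Sx - Sy := by omega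
      have := Int.le_of_dvd hpos hdvd
      omega
    · -- both true : T = q - p
      have hD : Sx - Sy = ((p:ℤ)+1) + T - ((q:ℤ)+1) := by
        rw [hid]; unfold F; rw [hb, hc]; simp
      have hTeq : T = (q:ℤ) - p := by
        rcases eq_or_lt_of_le hT1 with h0 | h0
        · exact h0
        · exfalso
          have hneg : 0 < -(Sx - Sy) := by omega
          have := Int.le_of_dvd hneg (dvd_neg.mpr hdvd)
          omega
      have hone : ∀ i ∈ Finset.Ico p q, F y i = 1 := by
        by_contra hcon
        push_neg at hcon
        obtain ⟨i0, hi0, hne⟩ := hcon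
        have hlt : F y i0 < 1 := lt_of_le_of_ne (F_le_one y i0) hne
        have hlt2 : T < ((q - p : ℕ) : ℤ) := by
          have hss : T < ∑ _i ∈ Finset.Ico p q, (1:ℤ) :=
            Finset.sum_lt_sum (fun i _ => F_le_one y i) ⟨i0, hi0, hlt⟩
          simpa [Finset.sum_const, Nat.card_Ico] using hss
        omega
      have hyt : ∀ i, p ≤ i → i ≤ q → y.getD i false = true := by
        intro i h1 h2
        rcases eq_or_lt_of_le h2 with rfl | h2
        · exact hc
        · have := hone i (Finset.mem_Ico.mpr ⟨h1, h2⟩)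
          unfold F at this
          rcases hgd : y.getD i false with _ | _
          · exfalso; rw [hgd] at this; simp at this
          · rfl
      have hxt : ∀ i, p ≤ i → i ≤ q → x.getD i false = true := by
        intro i h1 h2
        rcases eq_or_lt_of_le h1 with rfl | h1
        · exact hb
        · have e : i - 1 + 1 = i := by omega
          rw [← e, key2 (i-1) (by omega) (by omega)]
          exact hyt (i-1) (by omega) (by omega)
      intro i
      rcases lt_or_ge i p with hi | hi
      · exact key1 i hi
      · rcases le_or_gt i q with hi2 | hi2
        · rw [hxt i hi hi2, hyt i hi hi2]
        · exact key3 i hi2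
  -- conclude
  apply List.ext_getElem (by rw [hx, hy])
  intro i h1 h2
  rw [← List.getD_eq_getElem x false h1, ← List.getD_eq_getElem y false h2]
  exact hall i

end VTAux

/-- The Varshamov-Tenengolz code `VT_a(n)` (binary vectors of length `n` with
`∑ i·x_i ≡ a (mod n+1)`) corrects a single deletion: if two codewords yield the
same length-`(n-1)` vector after deleting one coordinate each, they are equal. -/
theorem vt_code_single_deletion_correcting (n a : ℕ) (x y : List Bool)
    (hx : x.length = n) (hy : y.length = n)
    (hxa : (∑ i ∈ Finset.range n, (i + 1) * (if x.getD i false then 1 else 0)) % (n + 1) = a)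
    (hya : (∑ i ∈ Finset.range n, (i + 1) * (if y.getD i false then 1 else 0)) % (n + 1) = a)
    (p q : ℕ) (hp : p < n) (hq : q < n)
    (h : x.eraseIdx p = y.eraseIdx q) : x = y := by
  rcases le_total p q with hpq | hpq
  · exact VTAux.aux n a x y hx hy hxa hya p q hp hq hpq h
  · exact (VTAux.aux n a y x hy hx hya hxa q p hq hp hpq h.symm).symm
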